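/- Every graph G on n ≥ 3 vertices with minimum degree δ(G) ≥ n/2 is Hamiltonian. -/

import Mathlib

namespace DiracAux

open SimpleGraph Walk List

variable {V : Type*} {G : SimpleGraph V}

/-- The first `n` darts of a walk. -/
def wtake : {u v : V} → (p : G.Walk u v) → (n : ℕ) → G.Walk u (p.getVert n)
  | _, _, p, 0 => Walk.nil.copy rfl (p.getVert_zero).symm
  | _, _, .nil, _+1 => .nil
  | _, _, .cons h q, n+1 => .cons h (wtake q n)

/-- The walk after removing the first `n` darts. -/
def wdrop : {u v : V} → (p : G.Walk u v) → (n : ℕ) → G.Walk (p.getVert n) v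
  | _, _, p, 0 => p.copy (p.getVert_zero).symm rfl
  | _, _, .nil, _+1 => .nil
  | _, _, .cons h q, n+1 => wdrop q n

@[simp] lemma wtake_zero {u v : V} (p : G.Walk u v) :
    wtake p 0 = Walk.nil.copy rfl (p.getVert_zero).symm := by
  cases p <;> rfl

lemma wtake_append_wdrop {u v : V} (p : G.Walk u v) (n : ℕ) :
    (wtake p n).append (wdrop p n) = p := by
  induction p generalizing n with
  | nil => cases n <;> simp [wtake, wdrop]
  | cons h q ih =>
    cases n with
    | zero => simp [wtake, wdrop]
    | succ n => simp [wtake, wdrop, ih]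

lemma length_wtake {u v : V} (p : G.Walk u v) (n : ℕ) (hn : n ≤ p.length) :
    (wtake p n).length = n := by
  induction p generalizing n with
  | nil =>
    simp only [Walk.length_nil, Nat.le_zero] at hn
    subst hn; simp [wtake]
  | cons h q ih =>
    cases n with
    | zero => simp [wtake]
    | succ n => show (wtake q n).length + 1 = n + 1; rw [ih]; simpa using hn

lemma getVert_wtake {u v : V} (p : G.Walk u v) (n m : ℕ) (hm : m ≤ n) :
    (wtake p n).getVert m = p.getVert m := by
  induction p generalizing n m with
  | nil => cases n <;> simp [wtake]
  | cons h q ih =>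
    cases n with
    | zero => interval_cases m; simp [wtake]
    | succ n =>
      cases m with
      | zero => simp [wtake]
      | succ m =>
        simp only [wtake, Walk.getVert_cons_succ]
        exact ih n m (Nat.succ_le_succ_iff.mp hm)

lemma support_wtake_succ {u v : V} (p : G.Walk u v) (n : ℕ) (hn : n < p.length) :
    (wtake p (n+1)).support = (wtake p n).support ++ [p.getVert (n+1)] := by
  induction p generalizing n with
  | nil => simp at hn
  | cons h q ih =>
    cases n with
    | zero => simp [wtake]
    | succ n =>
      simp only [wtake, Walk.support_cons, Walk.getVert_cons_succ]
      rw [ih n (by simpa using hn)]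
      simp

lemma getVert_mem_support {u v : V} (p : G.Walk u v) (n : ℕ) :
    p.getVert n ∈ p.support := by
  by_cases hn : n ≤ p.length
  · exact Walk.mem_support_iff_exists_getVert.mpr ⟨n, rfl, hn⟩
  · rw [p.getVert_of_length_le (le_of_not_ge hn)]
    exact p.end_mem_support

lemma getVert_injOn {u v : V} {p : G.Walk u v} (hp : p.IsPath) :
    ∀ i, i ≤ p.length → ∀ j, j ≤ p.length → p.getVert i = p.getVert j → i = j := by
  induction p with
  | nil => intro i hi j hj _; simp at hi hj; omega
  | cons h q ih =>
    rw [Walk.cons_isPath_iff] at hp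
    intro i hi j hj hij
    match i, j with
    | 0, 0 => rfl
    | 0, (j+1) =>
      exfalso
      rw [Walk.getVert_zero, Walk.getVert_cons_succ] at hij
      exact hp.2 (hij ▸ getVert_mem_support q j)
    | (i+1), 0 =>
      exfalso
      rw [Walk.getVert_zero, Walk.getVert_cons_succ] at hij
      exact hp.2 (hij ▸ getVert_mem_support q i)
    | (i+1), (j+1) =>
      rw [Walk.getVert_cons_succ, Walk.getVert_cons_succ] at hij
      have := ih hp.1 i (by simpa using hi) j (by simpa using hj) hij
      omega

end DiracAux

open SimpleGraph Walk List DiracAux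

/-- Dirac's theorem: every graph on `n ≥ 3` vertices with minimum degree at least `n/2`
is Hamiltonian. -/
theorem stmt_5 {V : Type*} [Fintype V] [DecidableEq V] (G : SimpleGraph V) [DecidableRel G.Adj]
    (hn : 3 ≤ Fintype.card V)
    (hδ : ∀ v : V, (Fintype.card V : ℝ) / 2 ≤ G.degree v) :
    G.IsHamiltonian := by
  classical
  intro _
  set n := Fintype.card V with hn'
  have hNV : Nonempty V := Fintype.card_pos_iff.mp (by omega)
  -- pairwise degree bound
  have hdeg2 : ∀ u v : V, n ≤ G.degree u + G.degree v := by
    intro u v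
    have h1 := hδ u
    have h2 := hδ v
    have : (n : ℝ) ≤ (G.degree u : ℝ) + G.degree v := by linarith
    exact_mod_cast this
  -- G is preconnected
  have hreach : ∀ u v : V, G.Reachable u v := by
    intro u v
    rcases eq_or_ne u v with rfl | huv
    · rfl
    by_cases hadj : G.Adj u v
    · exact hadj.reachable
    have hsub : G.neighborFinset u ∪ G.neighborFinset v ⊆ Finset.univ \ {u, v} := by
      intro x hx
      simp only [Finset.mem_union, SimpleGraph.mem_neighborFinset] at hx
      simp only [Finset.mem_sdiff, Finset.mem_univ, Finset.mem_insert, Finset.mem_singleton,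
        true_and]
      rcases hx with hx | hx
      · exact fun h => h.elim (fun h => G.irrefl (h ▸ hx)) (fun h => hadj (h ▸ hx))
      · refine fun h => h.elim (fun h => ?_) (fun h => G.irrefl (h ▸ hx))
        exact hadj ((h ▸ hx).symm)
    have hcard : (G.neighborFinset u ∪ G.neighborFinset v).card ≤ n - 2 := by
      refine le_trans (Finset.card_le_card hsub) ?_
      rw [Finset.card_sdiff_of_subset (by simp)]
      have : ({u, v} : Finset V).card = 2 := by rw [Finset.card_insert_of_notMem (by simpa using huv), Finset.card_singleton]
      simp [this]; omega
    have hinter : (G.neighborFinset u ∩ G.neighborFinset v).Nonempty := by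
      rw [← Finset.card_pos]
      have := Finset.card_union_add_card_inter (G.neighborFinset u) (G.neighborFinset v)
      have hd := hdeg2 u v
      rw [← SimpleGraph.card_neighborFinset_eq_degree, ← SimpleGraph.card_neighborFinset_eq_degree] at hd
      omega
    obtain ⟨t, ht⟩ := hinter
    simp only [Finset.mem_inter, SimpleGraph.mem_neighborFinset] at ht
    exact ht.1.reachable.trans ht.2.symm.reachable
  -- longest path
  set P : ℕ → Prop := fun k => ∃ (a b : V) (q : G.Walk a b), q.IsPath ∧ q.length = k with hP
  have hPbd : ∀ m, P m → m ≤ n := by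
    rintro m ⟨a, b, q, hq, rfl⟩
    exact le_of_lt hq.length_lt
  have hP0 : P 0 := by
    obtain ⟨x⟩ := hNV
    exact ⟨x, x, Walk.nil, by simp, rfl⟩
  obtain ⟨k, hPk, hmax⟩ : ∃ k, P k ∧ ∀ m, P m → m ≤ k :=
    ⟨Nat.findGreatest P n, Nat.findGreatest_spec (P := P) (Nat.zero_le n) hP0,
     fun m hm => Nat.le_findGreatest (hPbd m hm) hm⟩
  obtain ⟨a, b, p, hp, hlen⟩ := hPk
  -- all neighbors of the endpoints lie on the path
  have hNa : ∀ c, G.Adj a c → c ∈ p.support := by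
    intro c hc
    by_contra hcs
    have : P (k + 1) := ⟨c, b, .cons hc.symm p, hp.cons hcs, by simp [hlen]⟩
    have := hmax _ this
    omega
  have hNb : ∀ c, G.Adj b c → c ∈ p.support := by
    intro c hc
    by_contra hcs
    have : P (k + 1) :=
      ⟨c, a, .cons hc.symm p.reverse, hp.reverse.cons (by simpa using hcs), by simp [hlen]⟩
    have := hmax _ this
    omega
  -- k ≥ 2
  have hk2 : 2 ≤ k := by
    have hsub : insert a (G.neighborFinset a) ⊆ p.support.toFinset := by
      intro x hx
      rw [Finset.mem_insert, SimpleGraph.mem_neighborFinset] at hx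
      rw [List.mem_toFinset]
      rcases hx with rfl | hx
      · exact p.start_mem_support
      · exact hNa x hx
    have hca : 2 ≤ G.degree a := by
      by_contra h
      have h1 : (G.degree a : ℝ) ≤ 1 := by exact_mod_cast Nat.lt_succ_iff.mp (by omega)
      have h2 := hδ a
      have : (3 : ℝ) ≤ n := by exact_mod_cast hn
      linarith
    have h3 : 3 ≤ p.support.toFinset.card := by
      refine le_trans ?_ (Finset.card_le_card hsub)
      rw [Finset.card_insert_of_notMem (by simp), SimpleGraph.card_neighborFinset_eq_degree]
      omega
    have h4 : p.support.toFinset.card ≤ p.support.length := p.support.toFinset_card_le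
    have h5 : p.support.length = k + 1 := by rw [Walk.length_support, hlen]
    omega
  have hklen : p.length = k := hlen
  have hkn : k < n := by
    have := hp.length_lt
    omega
  -- the crossing pair
  have hinj := getVert_injOn hp
  obtain ⟨i, hik, hai, hbi⟩ :
      ∃ i, i < k ∧ G.Adj a (p.getVert (i+1)) ∧ G.Adj b (p.getVert i) := by
    set A := (Finset.range k).filter (fun i => G.Adj a (p.getVert (i+1))) with hA
    set B := (Finset.range k).filter (fun i => G.Adj b (p.getVert i)) with hB
    have hAcard : A.card = G.degree a := by
      rw [← SimpleGraph.card_neighborFinset_eq_degree]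
      refine Finset.card_bij (fun i _ => p.getVert (i+1)) ?_ ?_ ?_
      · intro i hi
        rw [hA, Finset.mem_filter] at hi
        exact (SimpleGraph.mem_neighborFinset _ _ _).mpr hi.2
      · intro i hi j hj hij
        rw [hA, Finset.mem_filter, Finset.mem_range] at hi hj
        have := hinj (i+1) (by omega) (j+1) (by omega) hij
        omega
      · intro c hc
        rw [SimpleGraph.mem_neighborFinset] at hc
        obtain ⟨j, hj1, hj2⟩ := Walk.mem_support_iff_exists_getVert.mp (hNa c hc)
        have hj0 : j ≠ 0 := by
          rintro rfl
          rw [Walk.getVert_zero] at hj1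
          exact G.irrefl (hj1 ▸ hc)
        refine ⟨j - 1, ?_, ?_⟩
        · rw [hA, Finset.mem_filter, Finset.mem_range]
          refine ⟨by omega, ?_⟩
          rw [show j - 1 + 1 = j by omega]; exact hj1 ▸ hc
        · show p.getVert (j - 1 + 1) = c
          rw [show j - 1 + 1 = j by omega]; exact hj1
    have hBcard : B.card = G.degree b := by
      rw [← SimpleGraph.card_neighborFinset_eq_degree]
      refine Finset.card_bij (fun i _ => p.getVert i) ?_ ?_ ?_
      · intro i hi
        rw [hB, Finset.mem_filter] at hi
        exact (SimpleGraph.mem_neighborFinset _ _ _).mpr hi.2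
      · intro i hi j hj hij
        rw [hB, Finset.mem_filter, Finset.mem_range] at hi hj
        exact hinj i (by omega) j (by omega) hij
      · intro c hc
        rw [SimpleGraph.mem_neighborFinset] at hc
        obtain ⟨j, hj1, hj2⟩ := Walk.mem_support_iff_exists_getVert.mp (hNb c hc)
        have hjk : j ≠ k := by
          rintro rfl
          rw [← hklen, Walk.getVert_length] at hj1
          exact G.irrefl (hj1 ▸ hc)
        refine ⟨j, ?_, hj1⟩
        rw [hB, Finset.mem_filter, Finset.mem_range]
        exact ⟨by omega, hj1 ▸ hc⟩
    have hUn : (A ∪ B).card ≤ k := by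
      refine le_trans (Finset.card_le_card (fun x hx => ?_)) (Finset.card_range k).le
      rw [Finset.mem_union, hA, hB, Finset.mem_filter, Finset.mem_filter] at hx
      rcases hx with hx | hx <;> exact hx.1
    have hne : (A ∩ B).Nonempty := by
      rw [← Finset.card_pos]
      have h1 := Finset.card_union_add_card_inter A B
      have h2 := hdeg2 a b
      omega
    obtain ⟨i, hi⟩ := hne
    rw [Finset.mem_inter, hA, hB, Finset.mem_filter, Finset.mem_filter, Finset.mem_range] at hi
    exact ⟨i, hi.1.1, hi.1.2, hi.2.2⟩
  have hik1 : i + 1 ≤ p.length := by omega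
  -- build the cycle C through all of p.support
  set v' := p.getVert (i+1) with hv'
  set T := wtake p i with hT
  set Dp := wdrop p (i+1) with hDp
  set Q : G.Walk v' a := Dp.append (Walk.cons hbi T.reverse) with hQ
  set C : G.Walk a a := Walk.cons hai Q with hC
  have hsplit : p.support = (wtake p (i+1)).support ++ Dp.support.tail := by
    conv_lhs => rw [← wtake_append_wdrop p (i+1)]
    rw [Walk.support_append]
  have hTsucc : (wtake p (i+1)).support = T.support ++ [v'] :=
    support_wtake_succ p i (by omega)
  have hsplit' : p.support = T.support ++ [v'] ++ Dp.support.tail := by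
    rw [hsplit, hTsucc]
  have hQsup : Q.support = (v' :: Dp.support.tail) ++ T.support.reverse := by
    rw [hQ, Walk.support_append, Walk.support_cons, List.tail_cons, Walk.support_reverse,
      ← Walk.support_eq_cons]
  have hQperm : Q.support.Perm p.support := by
    rw [hQsup, hsplit']
    calc (v' :: Dp.support.tail) ++ T.support.reverse
        ~ T.support.reverse ++ (v' :: Dp.support.tail) := List.perm_append_comm
      _ ~ T.support ++ (v' :: Dp.support.tail) := (T.support.reverse_perm).append_right _
      _ = T.support ++ [v'] ++ Dp.support.tail := by simp
  have hQpath : Q.IsPath := by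
    rw [Walk.isPath_def]
    exact hQperm.nodup_iff.mpr hp.support_nodup
  have hpnodup : (T.support ++ [v'] ++ Dp.support.tail).Nodup := hsplit' ▸ hp.support_nodup
  have haT : a ∈ T.support := T.start_mem_support
  have hv'T : v' ∉ T.support := by
    intro hmem
    obtain ⟨m, hm1, hm2⟩ := Walk.mem_support_iff_exists_getVert.mp hmem
    rw [length_wtake p i (by omega)] at hm2
    rw [getVert_wtake p i m hm2] at hm1
    have := hinj (i+1) (by omega) m (by omega) hm1.symm
    omega
  have haDp : a ∉ Dp.support := by
    intro hmem
    rw [Walk.support_eq_cons] at hmem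
    rcases List.mem_cons.mp hmem with h | h
    · have : Dp.getVert 0 = v' := Walk.getVert_zero Dp
      have h0 : p.getVert 0 = p.getVert (i+1) := by
        rw [Walk.getVert_zero]; exact h
      have := hinj 0 (by omega) (i+1) (by omega) h0
      omega
    · rw [List.append_assoc] at hpnodup
      have hd := List.disjoint_of_nodup_append hpnodup
      exact (hd haT) (List.mem_append_right _ h)
  have hedge : s(a, v') ∉ Q.edges := by
    rw [hQ, Walk.edges_append, Walk.edges_cons]
    simp only [List.mem_append, List.mem_cons, not_or]
    refine ⟨fun h => haDp (Walk.fst_mem_support_of_mem_edges Dp h), ?_, fun h => ?_⟩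
    · intro h
      rw [Sym2.eq_iff] at h
      rcases h with ⟨h1, h2⟩ | ⟨h1, h2⟩
      · subst h1
        have h0 : p.getVert 0 = p.getVert k := by
          rw [Walk.getVert_zero, ← hklen, Walk.getVert_length]
        have := hinj 0 (by omega) k (by omega) h0
        omega
      · have h0 : p.getVert 0 = p.getVert i := by rw [Walk.getVert_zero]; exact h1
        have hi0 : i = 0 := (hinj 0 (by omega) i (by omega) h0).symm
        subst hi0
        have h3 : p.getVert (0+1) = p.getVert k := by
          rw [← hklen, Walk.getVert_length]; exact h2
        have := hinj (0+1) (by omega) k (by omega) h3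
        omega
    · rw [Walk.edges_reverse, List.mem_reverse] at h
      exact hv'T (Walk.snd_mem_support_of_mem_edges T h)
  have hCcyc : C.IsCycle := (Walk.cons_isCycle_iff Q hai).mpr ⟨hQpath, hedge⟩
  have hCsup : C.support = a :: Q.support := by rw [hC, Walk.support_cons]
  have hClen : C.length = k + 1 := by
    have h1 : C.support.length = C.length + 1 := Walk.length_support C
    have h2 : Q.support.length = p.support.length := hQperm.length_eq
    have h3 : p.support.length = k + 1 := by rw [Walk.length_support, hlen]
    rw [hCsup] at h1
    simp only [List.length_cons] at h1
    omega
  -- the path's support is everything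
  have hall : ∀ w : V, w ∈ p.support := by
    by_contra h
    push_neg at h
    obtain ⟨w, hw⟩ := h
    obtain ⟨W⟩ := hreach a w
    obtain ⟨d, _, hdS, hdS'⟩ := W.exists_boundary_dart {x | x ∈ p.support} p.start_mem_support hw
    have hx : d.fst ∈ C.support := by
      rw [hCsup]
      exact List.mem_cons_of_mem _ (hQperm.mem_iff.mpr hdS)
    set D := C.rotate _ hx with hD
    have hDcyc : D.IsCycle := hCcyc.rotate hx
    have hDnil : ¬ D.Nil := hDcyc.not_nil
    have hDrot : D.support.tail ~r C.support.tail := Walk.support_rotate C _ hx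
    have hDtail : D.tail.support = D.support.tail := Walk.support_tail_of_not_nil D hDnil
    have hDtperm : D.support.tail.Perm Q.support := by
      have : C.support.tail = Q.support := by rw [hCsup]; rfl
      exact this ▸ hDrot.perm
    have hEpath : D.tail.reverse.IsPath := by
      have hnodup : D.tail.support.Nodup := by
        rw [hDtail]
        exact hDtperm.nodup_iff.mpr ((Walk.isPath_def _).mp hQpath)
      exact ((Walk.isPath_def _).mpr hnodup).reverse
    have hyE : d.snd ∉ D.tail.reverse.support := by
      rw [Walk.support_reverse, List.mem_reverse, hDtail]
      intro hmem
      exact hdS' (hQperm.mem_iff.mp (hDtperm.mem_iff.mp hmem))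
    have hnewpath : (Walk.cons d.adj.symm D.tail.reverse).IsPath := hEpath.cons hyE
    have hDlen : D.length = C.length := by
      have h1 := hDtperm.length_eq
      have h2 : Q.support.length = Q.length + 1 := Walk.length_support Q
      have h3 : C.length = Q.length + 1 := by rw [hC]; simp
      have h4 : D.support.length = D.length + 1 := Walk.length_support D
      have h5 : D.support.tail.length = D.support.length - 1 := by
        rw [List.length_tail]
      omega
    have hnewlen : (Walk.cons d.adj.symm D.tail.reverse).length = k + 1 := by
      have h1 : D.tail.length + 1 = D.length := Walk.length_tail_add_one hDnil
      simp only [Walk.length_cons, Walk.length_reverse]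
      omega
    have : P (k + 1) := ⟨_, _, _, hnewpath, hnewlen⟩
    have := hmax _ this
    omega
  -- conclude
  refine ⟨a, C, ?_⟩
  rw [Walk.isHamiltonianCycle_isCycle_and_isHamiltonian_tail]
  refine ⟨hCcyc, fun w => ?_⟩
  have htail : C.tail.support = Q.support := by
    rw [Walk.support_tail_of_not_nil C hCcyc.not_nil, hCsup, List.tail_cons]
  rw [htail]
  exact List.count_eq_one_of_mem ((Walk.isPath_def _).mp hQpath)
    (hQperm.mem_iff.mpr (hall w))
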